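/- Let T, n, m be positive integers. For h ∈ Fin T let W h be an n×n positive definite real matrix; let Φ be an m×n real matrix, X an m×m symmetric real matrix, and x̄ : Fin m → ℝ with x̄ f ≥ 0 for all f. Assume that for every h ∈ Fin T the 2×2 block matrix with blocks [−X , Φ·(W h) ; (Φ·(W h))ᵀ , −(W h)] is negative semidefinite, and that X f f ≤ (x̄ f)² for every f ∈ Fin m. Then for all convex weights θ on Fin T and every vector x ∈ ℝⁿ with ∑_h θ h · (xᵀ·(W h)⁻¹·x) ≤ 1, one has |(Φ·x) f| ≤ x̄ f for every f ∈ Fin m. -/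

import Mathlib

open Matrix

/-- State-constraint part of Lemma 2: the LMI (3-22) guarantees the
componentwise hard bound `|(Φx)_f| ≤ x̄_f` on the ellipsoid
`∑ₕ θₕ xᵀ Wₕ⁻¹ x ≤ 1`. -/
theorem stmt_2 (T n m : ℕ) (hT : 0 < T) (hn : 0 < n) (hm : 0 < m)
    (W : Fin T → Matrix (Fin n) (Fin n) ℝ) (hW : ∀ h, (W h).PosDef)
    (Φ : Matrix (Fin m) (Fin n) ℝ)
    (X : Matrix (Fin m) (Fin m) ℝ) (hX : X.IsHermitian)
    (xb : Fin m → ℝ) (hxb : ∀ f, 0 ≤ xb f)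
    (hLMI : ∀ h,
      (-(Matrix.fromBlocks (-X) (Φ * W h) (Φ * W h)ᵀ (-(W h)))).PosSemidef)
    (hXdiag : ∀ f, X f f ≤ (xb f) ^ 2) :
    ∀ (θ : Fin T → ℝ) (x : Fin n → ℝ),
      (∀ h, 0 ≤ θ h) → ∑ h, θ h = 1 →
      (∑ h, θ h * (x ⬝ᵥ (W h)⁻¹ *ᵥ x)) ≤ 1 →
      ∀ f, |(Φ *ᵥ x) f| ≤ xb f := by

  intro θ x hθ hθ1 hell f
  set c := (Φ *ᵥ x) f with hc
  have key : ∀ h, 0 ≤ X f f - 2 * c ^ 2 + c ^ 2 * (x ⬝ᵥ (W h)⁻¹ *ᵥ x) := by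
    intro h
    have hinv : W h * (W h)⁻¹ = 1 :=
      Matrix.mul_nonsing_inv _ (isUnit_iff_ne_zero.mpr (hW h).det_pos.ne')
    have e2 : (Φ * W h) *ᵥ ((W h)⁻¹ *ᵥ x) = Φ *ᵥ x := by
      rw [mulVec_mulVec, Matrix.mul_assoc, hinv, Matrix.mul_one]
    have e3 : W h *ᵥ ((W h)⁻¹ *ᵥ x) = x := by
      rw [mulVec_mulVec, hinv, one_mulVec]
    have h2 := (hLMI h).dotProduct_mulVec_nonneg
      (Sum.elim (Pi.single f 1) (c • ((W h)⁻¹ *ᵥ x)))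
    simp only [star_trivial, fromBlocks_neg, neg_neg, fromBlocks_mulVec,
      Sum.elim_comp_inl, Sum.elim_comp_inr,
      sumElim_dotProduct_sumElim, dotProduct_add, mulVec_smul, neg_mulVec,
      dotProduct_neg, smul_dotProduct, dotProduct_smul, e2, e3,
      single_dotProduct, one_mul, smul_eq_mul, mulVec_single, mul_one,
      Pi.add_apply, Pi.neg_apply, Pi.smul_apply] at h2
    have e4 : (((W h)⁻¹ *ᵥ x) ⬝ᵥ fun i => (-(Φ * W h)ᵀ) i f) = -c := by
      have e5 : (fun i => (-(Φ * W h)ᵀ) i f) = -((Φ * W h) f) := rfl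
      rw [e5, dotProduct_neg, dotProduct_comm]
      show -(((Φ * W h) *ᵥ ((W h)⁻¹ *ᵥ x)) f) = -c
      rw [e2]
    simp only [MulOpposite.op_one, one_smul, col_apply] at h2
    rw [show (-(Φ * W h)ᵀ).col f = fun i => (-(Φ * W h)ᵀ) i f from rfl, e4] at h2
    have hcomm : ((W h)⁻¹ *ᵥ x) ⬝ᵥ x = x ⬝ᵥ (W h)⁻¹ *ᵥ x := dotProduct_comm _ _
    nlinarith [h2]
  have hsum : 0 ≤ ∑ h, θ h * (X f f - 2 * c ^ 2 + c ^ 2 * (x ⬝ᵥ (W h)⁻¹ *ᵥ x)) :=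
    Finset.sum_nonneg fun h _ => mul_nonneg (hθ h) (key h)
  have hexp : ∑ h, θ h * (X f f - 2 * c ^ 2 + c ^ 2 * (x ⬝ᵥ (W h)⁻¹ *ᵥ x))
      = X f f - 2 * c ^ 2 + c ^ 2 * ∑ h, θ h * (x ⬝ᵥ (W h)⁻¹ *ᵥ x) := by
    simp only [mul_add, mul_sub, Finset.sum_add_distrib, Finset.sum_sub_distrib,
      ← Finset.sum_mul, hθ1, Finset.mul_sum]
    ring_nf
  have hc2 : c ^ 2 ≤ (xb f) ^ 2 := by
    nlinarith [hXdiag f, sq_nonneg c]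
  calc |c| = Real.sqrt (c ^ 2) := (Real.sqrt_sq_eq_abs c).symm
    _ ≤ Real.sqrt ((xb f) ^ 2) := Real.sqrt_le_sqrt hc2
    _ = xb f := Real.sqrt_sq (hxb f)
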